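/- Let θ₁, θ₂ > 0 be real numbers. Let A₁ be an n×n signed bipartite adjacency matrix with parts of sizes s and n−s satisfying A₁² = θ₁²·I_n, and let A₂ be an m×m signed adjacency matrix satisfying A₂² = θ₂²·I_m. Let 𝒜' = (A₁ + D)⊗A₂ be the signed semi-strong product matrix. Then for every subset S of the mn row indices of 𝒜' with |S| = mn/2 + 1 (note mn is necessarily even), there exists u ∈ S such that #{v ∈ S : 𝒜'_{uv} ≠ 0} ≥ √((θ₁² + 1)·θ₂²). -/

import Mathlib

open Matrix Kronecker

/-- If `A₁` is an `n × n` signed bipartite adjacency matrix (parts of sizes `s` and `t = n - s`)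
with `A₁² = θ₁² I`, and `A₂` is an `m × m` signed adjacency matrix with `A₂² = θ₂² I`, then
every `(mn/2 + 1)`-vertex induced subgraph of the signed semi-strong product
`𝒜' = (A₁ + D) ⊗ A₂` has maximum degree at least `√((θ₁² + 1)·θ₂²)`. -/
theorem signed_semi_strong_product_induced_subgraph_max_degree
    (s t m : ℕ) (θ₁ θ₂ : ℝ) (hθ₁ : 0 < θ₁) (hθ₂ : 0 < θ₂)
    (P : Matrix (Fin s) (Fin t) ℝ)
    (hP : ∀ i j, P i j = -1 ∨ P i j = 0 ∨ P i j = 1)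
    (A₂ : Matrix (Fin m) (Fin m) ℝ)
    (hA₂symm : A₂.IsSymm) (hA₂diag : ∀ i, A₂ i i = 0)
    (hA₂ent : ∀ i j, A₂ i j = -1 ∨ A₂ i j = 0 ∨ A₂ i j = 1)
    (A₁ : Matrix (Fin s ⊕ Fin t) (Fin s ⊕ Fin t) ℝ)
    (hA₁ : A₁ = Matrix.fromBlocks 0 P Pᵀ 0)
    (hA₁sq : A₁ * A₁ = (θ₁ ^ 2) • (1 : Matrix (Fin s ⊕ Fin t) (Fin s ⊕ Fin t) ℝ))
    (hA₂sq : A₂ * A₂ = (θ₂ ^ 2) • (1 : Matrix (Fin m) (Fin m) ℝ))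
    (D : Matrix (Fin s ⊕ Fin t) (Fin s ⊕ Fin t) ℝ)
    (hD : D = Matrix.fromBlocks 1 0 0 (-1))
    (𝒜 : Matrix ((Fin s ⊕ Fin t) × Fin m) ((Fin s ⊕ Fin t) × Fin m) ℝ)
    (h𝒜 : 𝒜 = (A₁ + D) ⊗ₖ A₂)
    (S : Finset ((Fin s ⊕ Fin t) × Fin m))
    (hS : 2 * S.card = m * (s + t) + 2) :
    ∃ u ∈ S, Real.sqrt ((θ₁ ^ 2 + 1) * θ₂ ^ 2) ≤
      ((S.filter (fun v => 𝒜 u v ≠ 0)).card : ℝ) := by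
  classical
  set c : ℝ := (θ₁ ^ 2 + 1) * θ₂ ^ 2 with hc
  have hcpos : 0 < c := by positivity
  set θ : ℝ := Real.sqrt c with hθdef
  have hθpos : 0 < θ := Real.sqrt_pos.mpr hcpos
  have hθsq : θ ^ 2 = c := Real.sq_sqrt hcpos.le
  -- square of A₁ + D
  have h1 : A₁ * D + D * A₁ = 0 := by
    rw [hA₁, hD]
    ext i j
    rcases i with i | i <;> rcases j with j | j <;>
      simp [Matrix.fromBlocks_multiply]
  have h2 : D * D = 1 := by
    rw [hD, Matrix.fromBlocks_multiply, ← Matrix.fromBlocks_one]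
    norm_num
  have hBsq : (A₁ + D) * (A₁ + D) = (θ₁ ^ 2 + 1) • 1 := by
    have expand : (A₁ + D) * (A₁ + D) = A₁ * A₁ + (A₁ * D + D * A₁) + D * D := by
      noncomm_ring
    rw [expand, hA₁sq, h1, h2, add_zero, add_smul, one_smul]
  have h𝒜sq : 𝒜 * 𝒜 = c • 1 := by
    rw [h𝒜, ← Matrix.mul_kronecker_mul, hBsq, hA₂sq, Matrix.smul_kronecker,
      Matrix.kronecker_smul, Matrix.one_kronecker_one, smul_smul, hc]
  -- trace of 𝒜 is zero
  have htr : Matrix.trace 𝒜 = 0 := by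
    rw [h𝒜, Matrix.trace]
    simp [Matrix.diag, hA₂diag]
  -- the projection matrix
  set Q : Matrix ((Fin s ⊕ Fin t) × Fin m) ((Fin s ⊕ Fin t) × Fin m) ℝ := (2 * θ)⁻¹ • (θ • (1 : Matrix ((Fin s ⊕ Fin t) × Fin m) ((Fin s ⊕ Fin t) × Fin m) ℝ) - 𝒜) with hQdef
  have hQidem : Q * Q = Q := by
    have key : (θ • (1 : Matrix ((Fin s ⊕ Fin t) × Fin m) ((Fin s ⊕ Fin t) × Fin m) ℝ) - 𝒜) * (θ • (1 : Matrix ((Fin s ⊕ Fin t) × Fin m) ((Fin s ⊕ Fin t) × Fin m) ℝ) - 𝒜)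
        = (2 * θ) • (θ • (1 : Matrix ((Fin s ⊕ Fin t) × Fin m) ((Fin s ⊕ Fin t) × Fin m) ℝ) - 𝒜) := by
      have hC : ∀ X : Matrix ((Fin s ⊕ Fin t) × Fin m) ((Fin s ⊕ Fin t) × Fin m) ℝ,
          (θ • (1 : Matrix ((Fin s ⊕ Fin t) × Fin m) ((Fin s ⊕ Fin t) × Fin m) ℝ)) * X
            = θ • X := by
        intro X; rw [Matrix.smul_mul, one_mul]
      have hC' : ∀ X : Matrix ((Fin s ⊕ Fin t) × Fin m) ((Fin s ⊕ Fin t) × Fin m) ℝ,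
          X * (θ • (1 : Matrix ((Fin s ⊕ Fin t) × Fin m) ((Fin s ⊕ Fin t) × Fin m) ℝ))
            = θ • X := by
        intro X; rw [Matrix.mul_smul, mul_one]
      simp only [sub_mul, mul_sub, hC, hC']
      rw [h𝒜sq, ← hθsq]
      module
    rw [hQdef, Matrix.smul_mul, Matrix.mul_smul, key, smul_smul, smul_smul]
    congr 1
    have : (2 * θ) ≠ 0 := by positivity
    field_simp
  -- trace of Q
  have hcard : Fintype.card ((Fin s ⊕ Fin t) × Fin m) = (s + t) * m := by
    simp
  have htrQ : Matrix.trace Q = ((s + t) * m : ℕ) / 2 := by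
    rw [hQdef, Matrix.trace_smul, Matrix.trace_sub, Matrix.trace_smul, htr, Matrix.trace_one,
      hcard]
    have h2θ : (2 * θ) ≠ 0 := by positivity
    field_simp
    rw [smul_eq_mul, smul_eq_mul, sub_zero]
    field_simp
  -- the projection linear map
  set f : ((((Fin s ⊕ Fin t) × Fin m → ℝ)) →ₗ[ℝ] (((Fin s ⊕ Fin t) × Fin m → ℝ))) := Matrix.toLin' Q with hfdef
  have hfidem : f ∘ₗ f = f := by
    rw [hfdef, ← Matrix.toLin'_mul, hQidem]
  obtain ⟨p, hp⟩ := (LinearMap.isProj_iff_isIdempotentElem f).mpr hfidem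
  have htrf : LinearMap.trace ℝ ((Fin s ⊕ Fin t) × Fin m → ℝ) f = (Module.finrank ℝ p : ℝ) := hp.trace
  have htrf' : LinearMap.trace ℝ ((Fin s ⊕ Fin t) × Fin m → ℝ) f = Matrix.trace Q := by
    rw [LinearMap.trace_eq_matrix_trace ℝ (Pi.basisFun ℝ ((Fin s ⊕ Fin t) × Fin m)), LinearMap.toMatrix_eq_toMatrix',
      hfdef, LinearMap.toMatrix'_toLin']
  -- finrank p = N / 2
  have hfr : 2 * Module.finrank ℝ p = (s + t) * m := by
    have : (2 * Module.finrank ℝ p : ℝ) = ((s + t) * m : ℕ) := by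
      rw [mul_comm]
      have := htrf.symm.trans (htrf'.trans htrQ)
      push_cast at this ⊢
      linarith
    exact_mod_cast this
  -- the extension-by-zero map
  set E : ((↥S : Type) → ℝ) →ₗ[ℝ] (((Fin s ⊕ Fin t) × Fin m → ℝ)) :=
    { toFun := fun y i => if h : i ∈ S then y ⟨i, h⟩ else 0
      map_add' := by intro y z; funext i; by_cases h : i ∈ S <;> simp [h]
      map_smul' := by intro r y; funext i; by_cases h : i ∈ S <;> simp [h] } with hEdef
  set g := f ∘ₗ E with hgdef
  have hrange : LinearMap.range g ≤ p := by
    rintro _ ⟨y, rfl⟩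
    exact hp.map_mem _
  have hdom : Module.finrank ℝ ((↥S : Type) → ℝ) = S.card := by
    rw [Module.finrank_pi]
    exact Fintype.card_coe S
  have hScard : S.card = Module.finrank ℝ p + 1 := by
    have h' : 2 * S.card = 2 * Module.finrank ℝ p + 2 := by
      rw [hS, Nat.mul_comm m (s + t), ← hfr]
    omega
  have hkerpos : 0 < Module.finrank ℝ (LinearMap.ker g) := by
    have hrn := LinearMap.finrank_range_add_finrank_ker g
    have h2' : Module.finrank ℝ (LinearMap.range g) ≤ Module.finrank ℝ p :=
      Submodule.finrank_mono hrange
    rw [hdom, hScard] at hrn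
    omega
  have hrkpos : 0 < Module.rank ℝ (LinearMap.ker g) := by
    rw [← Module.finrank_eq_rank]
    exact_mod_cast hkerpos
  obtain ⟨y, hy, hyne⟩ := exists_mem_ne_zero_of_rank_pos hrkpos
  set x : ((Fin s ⊕ Fin t) × Fin m → ℝ) := E y with hxdef
  have hsupp : ∀ i, i ∉ S → x i = 0 := by
    intro i hi
    simp only [hxdef, hEdef, LinearMap.coe_mk, AddHom.coe_mk]
    exact dif_neg hi
  have hxS : ∀ i : ↥S, x i = y i := by
    intro i
    simp only [hxdef, hEdef, LinearMap.coe_mk, AddHom.coe_mk]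
    rw [dif_pos i.2]
  have hxne : x ≠ 0 := by
    intro h
    apply hyne
    funext i
    have := congrFun h i
    rw [hxS] at this
    simpa using this
  have hfx : f x = 0 := by
    have := LinearMap.mem_ker.mp hy
    rw [hgdef, LinearMap.comp_apply] at this
    exact this
  -- eigenvector equation
  have heig : 𝒜 *ᵥ x = θ • x := by
    have hQx : Q *ᵥ x = 0 := by
      rw [← Matrix.toLin'_apply, ← hfdef, hfx]
    have h2θ : (2 * θ) ≠ 0 := by positivity
    have : (θ • (1 : Matrix ((Fin s ⊕ Fin t) × Fin m) ((Fin s ⊕ Fin t) × Fin m) ℝ) - 𝒜) *ᵥ x = 0 := by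
      have h0 := congrArg (fun v => (2 * θ) • v) hQx
      simp only [hQdef, Matrix.smul_mulVec, smul_smul, smul_zero] at h0
      rw [mul_inv_cancel₀ h2θ, one_smul] at h0
      exact h0
    rw [Matrix.sub_mulVec, Matrix.smul_mulVec, Matrix.one_mulVec, sub_eq_zero] at this
    exact this.symm
  -- entry bounds
  have hBent : ∀ a b, |(A₁ + D) a b| ≤ 1 := by
    rintro (a | a) (b | b) <;>
      simp only [hA₁, hD, Matrix.add_apply, Matrix.fromBlocks_apply₁₁,
        Matrix.fromBlocks_apply₁₂, Matrix.fromBlocks_apply₂₁, Matrix.fromBlocks_apply₂₂,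
        Matrix.zero_apply, Matrix.neg_apply, Matrix.transpose_apply, zero_add, add_zero]
    · rw [Matrix.one_apply]; split <;> simp
    · rcases hP a b with h | h | h <;> simp [h]
    · rcases hP b a with h | h | h <;> simp [h]
    · rw [Matrix.one_apply]; split <;> simp
  have hent : ∀ u v : (Fin s ⊕ Fin t) × Fin m, |𝒜 u v| ≤ 1 := by
    intro u v
    rw [h𝒜]
    have : ((A₁ + D) ⊗ₖ A₂) u v = (A₁ + D) u.1 v.1 * A₂ u.2 v.2 := rfl
    rw [this, abs_mul]
    have h2 : |A₂ u.2 v.2| ≤ 1 := by rcases hA₂ent u.2 v.2 with h | h | h <;> simp [h]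
    calc |(A₁ + D) u.1 v.1| * |A₂ u.2 v.2| ≤ 1 * 1 :=
          mul_le_mul (hBent _ _) h2 (abs_nonneg _) zero_le_one
      _ = 1 := one_mul 1
  -- pick the max
  have hNe : (Finset.univ : Finset ((Fin s ⊕ Fin t) × Fin m)).Nonempty := by
    have : S.Nonempty := Finset.card_pos.mp (by omega)
    exact ⟨this.choose, Finset.mem_univ _⟩
  obtain ⟨u, -, hu⟩ := Finset.exists_max_image (Finset.univ : Finset ((Fin s ⊕ Fin t) × Fin m)) (fun v => |x v|) hNe
  have hu' : ∀ v, |x v| ≤ |x u| := fun v => hu v (Finset.mem_univ v)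
  have hxu : x u ≠ 0 := by
    intro h
    apply hxne
    funext v
    have := hu' v
    rw [h, abs_zero] at this
    exact abs_nonpos_iff.mp this
  have huS : u ∈ S := by
    by_contra h
    exact hxu (hsupp u h)
  refine ⟨u, huS, ?_⟩
  set F := S.filter (fun v => 𝒜 u v ≠ 0) with hF
  have hsum : ∑ v, 𝒜 u v * x v = ∑ v ∈ F, 𝒜 u v * x v := by
    refine (Finset.sum_subset (Finset.subset_univ F) ?_).symm
    intro v _ hv
    rw [hF, Finset.mem_filter] at hv
    push_neg at hv
    by_cases hvS : v ∈ S
    · rw [hv hvS, zero_mul]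
    · rw [hsupp v hvS, mul_zero]
  have key : θ * |x u| ≤ (F.card : ℝ) * |x u| := by
    calc θ * |x u| = |θ * x u| := by
          rw [abs_mul, abs_of_pos hθpos]
      _ = |(𝒜 *ᵥ x) u| := by rw [heig]; simp
      _ = |∑ v, 𝒜 u v * x v| := by rw [Matrix.mulVec, dotProduct]
      _ = |∑ v ∈ F, 𝒜 u v * x v| := by rw [hsum]
      _ ≤ ∑ v ∈ F, |𝒜 u v * x v| := Finset.abs_sum_le_sum_abs _ _
      _ ≤ ∑ v ∈ F, |x u| := by
          refine Finset.sum_le_sum fun v _ => ?_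
          rw [abs_mul]
          calc |𝒜 u v| * |x v| ≤ 1 * |x u| :=
                mul_le_mul (hent u v) (hu' v) (abs_nonneg _) zero_le_one
            _ = |x u| := one_mul _
      _ = (F.card : ℝ) * |x u| := by rw [Finset.sum_const, nsmul_eq_mul]
  have hxupos : 0 < |x u| := abs_pos.mpr hxu
  exact le_of_mul_le_mul_right key hxupos
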